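/- Let (Ω, ℱ, ℙ) be a probability space, let r > 0, let M ≥ 0 be a real number, and let Q ≥ 1 be a natural number. Let N : Ω → ℕ have law the Poisson distribution with rate r, and let (X_i)_{i∈ℕ} be real-valued identically distributed random variables with common law μ satisfying ∫ |x|^j dμ(x) < ∞ for all 1 ≤ j ≤ Q, such that the family consisting of N together with all the X_i is independent. Then the random variable ∏_{i=0}^{N-1} ( 1 + M · ∑_{j=1}^{Q} |X_i|^j ) is integrable, and E[ ∏_{i=0}^{N-1} ( 1 + M · ∑_{j=1}^{Q} |X_i|^j ) ] = exp( r · M · ∑_{j=1}^{Q} ∫ |x|^j dμ(x) ); in particular this expectation is finite. -/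

import Mathlib

open MeasureTheory ProbabilityTheory
open scoped ENNReal NNReal

lemma aux_lintegral_indep_prod {Ω ι : Type*} [MeasurableSpace Ω] {P : Measure Ω}
    [IsProbabilityMeasure P] {Y : ι → Ω → ℝ≥0∞}
    (h : iIndepFun Y P) (hm : ∀ i, Measurable (Y i)) (s : Finset ι) :
    ∫⁻ ω, ∏ i ∈ s, Y i ω ∂P = ∏ i ∈ s, ∫⁻ ω, Y i ω ∂P := by
  classical
  induction s using Finset.induction_on with
  | empty => simp
  | @insert a s ha ih =>
    have hprodmeas : Measurable (fun ω => ∏ i ∈ s, Y i ω) :=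
      Finset.measurable_prod _ (fun i _ => hm i)
    have hind : IndepFun (Y a) (fun ω => ∏ i ∈ s, Y i ω) P := by
      have := (h.indepFun_finsetProd_of_notMem hm ha).symm
      have heq : (∏ i ∈ s, Y i) = fun ω => ∏ i ∈ s, Y i ω := by
        ext ω; simp
      rwa [heq] at this
    simp only [Finset.prod_insert ha]
    rw [lintegral_mul_eq_lintegral_mul_lintegral_of_indepFun'' (hm a).aemeasurable
      hprodmeas.aemeasurable hind, ih]

/-- The index family for the joint independence of a counting variable `N : Ω → ℕ`
(at index `none`) together with a sequence of `E`-valued variables (at indices `some i`). -/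
abbrev NXFam (E : Type*) : Option ℕ → Type _ :=
  fun o => match o with
  | none => ULift ℕ
  | some _ => E

/-- The canonical measurable space structures on `NXFam E`. -/
def NXFamMeas (E : Type*) [MeasurableSpace E] : ∀ o, MeasurableSpace (NXFam E o) :=
  fun o => match o with
  | none => inferInstance
  | some _ => inferInstance

/-- The family of random variables consisting of `N` (at index `none`) and the `X i`
(at indices `some i`). -/
def NXFun {Ω E : Type*} (N : Ω → ℕ) (X : ℕ → Ω → E) : ∀ o, Ω → NXFam E o :=
  fun o => match o with
  | none => fun ω => ULift.up (N ω)
  | some i => X i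

/-- If `N` is Poisson with rate `r`, the `X i` are identically distributed
real random variables with common law `μ` having finite absolute moments up to order `Q`, the
family `{N} ∪ {X i}` is independent, and `M ≥ 0`, then the random variable
`∏_{i<N} (1 + M * ∑_{j=1}^{Q} |X i|^j)` is integrable with expectation
`exp (r * M * ∑_{j=1}^{Q} ∫ |x|^j dμ)`; in particular this expectation is finite. -/
theorem stmt_7 {Ω : Type*} [MeasurableSpace Ω] (P : Measure Ω) [IsProbabilityMeasure P]
    (r : NNReal) (hr : 0 < r) (M : ℝ) (hM : 0 ≤ M) (Q : ℕ) (hQ : 1 ≤ Q)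
    (N : Ω → ℕ) (hN : Measurable N) (hNlaw : P.map N = poissonMeasure r)
    (X : ℕ → Ω → ℝ) (hX : ∀ i, Measurable (X i))
    (μ : Measure ℝ) [IsProbabilityMeasure μ] (hXlaw : ∀ i, P.map (X i) = μ)
    (hmom : ∀ j, 1 ≤ j → j ≤ Q → Integrable (fun x => |x| ^ j) μ)
    (hindep : iIndepFun (m := NXFamMeas ℝ) (NXFun N X) P) :
    Integrable
        (fun ω => ∏ i ∈ Finset.range (N ω),
          (1 + M * ∑ j ∈ Finset.Icc 1 Q, |X i ω| ^ j)) P ∧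
      ∫ ω, ∏ i ∈ Finset.range (N ω), (1 + M * ∑ j ∈ Finset.Icc 1 Q, |X i ω| ^ j) ∂P =
        Real.exp (r * M * ∑ j ∈ Finset.Icc 1 Q, ∫ x, |x| ^ j ∂μ) := by
  classical
  set ψ : ℝ → ℝ := fun x => 1 + M * ∑ j ∈ Finset.Icc 1 Q, |x| ^ j with hψdef
  have hψmeas : Measurable ψ := by
    apply Measurable.add measurable_const
    exact (Finset.measurable_sum _ fun j _ => (measurable_abs.pow_const j)).const_mul M
  have hψnn : ∀ x, 0 ≤ ψ x := by
    intro x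
    have : 0 ≤ ∑ j ∈ Finset.Icc 1 Q, |x| ^ j :=
      Finset.sum_nonneg fun j _ => pow_nonneg (abs_nonneg x) j
    simp only [hψdef]
    nlinarith
  have hsumint : Integrable (fun x => ∑ j ∈ Finset.Icc 1 Q, |x| ^ j) μ :=
    integrable_finset_sum _ fun j hj =>
      hmom j (Finset.mem_Icc.1 hj).1 (Finset.mem_Icc.1 hj).2
  have hψint : Integrable ψ μ := (integrable_const 1).add (hsumint.const_mul M)
  set c : ℝ := ∫ x, ψ x ∂μ with hcdef
  set cs : ℝ := ∑ j ∈ Finset.Icc 1 Q, ∫ x, |x| ^ j ∂μ with hcsdef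
  have hc : c = 1 + M * cs := by
    rw [hcdef, hψdef]
    rw [integral_add (integrable_const 1) (hsumint.const_mul M), integral_const]
    simp only [measure_univ, ENNReal.toReal_one, smul_eq_mul, one_mul, probReal_univ]
    rw [integral_const_mul, integral_finset_sum _ fun j hj =>
      hmom j (Finset.mem_Icc.1 hj).1 (Finset.mem_Icc.1 hj).2]
  have hcsnn : 0 ≤ cs :=
    Finset.sum_nonneg fun j _ => integral_nonneg fun x => pow_nonneg (abs_nonneg x) j
  have hcnn : 0 ≤ c := by rw [hc]; nlinarith
  set F : Ω → ℝ := fun ω => ∏ i ∈ Finset.range (N ω), ψ (X i ω) with hFdef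
  have hFnn : ∀ ω, 0 ≤ F ω := fun ω =>
    Finset.prod_nonneg fun i _ => hψnn (X i ω)
  have hFmeas : Measurable F := by
    have hn : ∀ n, Measurable fun ω => ∏ i ∈ Finset.range n, ψ (X i ω) :=
      fun n => Finset.measurable_prod _ fun i _ => hψmeas.comp (hX i)
    intro s hs
    have hset : F ⁻¹' s = ⋃ n, (N ⁻¹' {n}) ∩
        ((fun ω => ∏ i ∈ Finset.range n, ψ (X i ω)) ⁻¹' s) := by
      ext ω
      simp only [Set.mem_preimage, Set.mem_iUnion, Set.mem_inter_iff, Set.mem_singleton_iff]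
      constructor
      · intro h; exact ⟨N ω, rfl, h⟩
      · rintro ⟨n, hn', h⟩
        simp only [hFdef, Set.mem_preimage, hn']
        exact h
    rw [hset]
    exact MeasurableSet.iUnion fun n => (hN (measurableSet_singleton n)).inter (hn n hs)
  -- ENNReal side
  set G : ℕ → Ω → ℝ≥0∞ := fun i ω => ENNReal.ofReal (ψ (X i ω)) with hGdef
  have hGmeas : ∀ i, Measurable (G i) :=
    fun i => ENNReal.measurable_ofReal.comp (hψmeas.comp (hX i))
  have hGint : ∀ i, ∫⁻ ω, G i ω ∂P = ENNReal.ofReal c := by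
    intro i
    have h1 : ∫⁻ x, ENNReal.ofReal (ψ x) ∂(P.map (X i)) = ∫⁻ ω, G i ω ∂P :=
      lintegral_map (f := fun x => ENNReal.ofReal (ψ x))
        (ENNReal.measurable_ofReal.comp hψmeas) (hX i)
    rw [← h1, hXlaw i, ← ofReal_integral_eq_lintegral_ofReal hψint
      (Filter.Eventually.of_forall hψnn)]
  -- key identity for each n
  have hkey : ∀ n : ℕ,
      ∫⁻ ω, (N ⁻¹' {n}).indicator (fun _ => (1 : ℝ≥0∞)) ω * ∏ i ∈ Finset.range n, G i ω ∂P
        = ENNReal.ofReal (poissonPMFReal r n) * (ENNReal.ofReal c) ^ n := by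
    intro n
    set φ : ∀ o, NXFam ℝ o → ℝ≥0∞ := fun o =>
      match o with
      | none => fun u => if u.down = n then (1 : ℝ≥0∞) else 0
      | some _ => fun x => ENNReal.ofReal (ψ x) with hφdef
    have hφmeas : ∀ o, Measurable[NXFamMeas ℝ o] (φ o) := by
      intro o
      match o with
      | none => exact (measurable_from_nat (f := fun k : ℕ => if k = n then (1 : ℝ≥0∞) else 0)).comp measurable_down
      | some i => exact ENNReal.measurable_ofReal.comp hψmeas
    set Z : ∀ _ : Option ℕ, Ω → ℝ≥0∞ := fun o => φ o ∘ NXFun N X o with hZdef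
    have hZindep : iIndepFun Z P := hindep.comp φ hφmeas
    have hZmeas : ∀ o, Measurable (Z o) := by
      intro o
      match o with
      | none =>
        exact (hφmeas none).comp (measurable_up.comp hN : Measurable (NXFun N X none))
      | some i => exact (hφmeas (some i)).comp (hX i)
    have hZnone : Z none = (N ⁻¹' {n}).indicator (fun _ => (1 : ℝ≥0∞)) := by
      ext ω
      by_cases h : N ω = n <;> simp [hZdef, hφdef, NXFun, Set.indicator, h]
    have hZsome : ∀ i, Z (some i) = G i := fun i => rfl
    set s : Finset (Option ℕ) := (Finset.range n).image some with hsdef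
    have hnones : none ∉ s := by simp [hsdef]
    have hprodeq : ∀ ω, ∏ i ∈ Finset.range n, G i ω = ∏ o ∈ s, Z o ω := by
      intro ω
      rw [hsdef, Finset.prod_image (fun a _ b _ h => Option.some_injective ℕ h)]
      rfl
    have hprodmeas : Measurable fun ω => ∏ o ∈ s, Z o ω :=
      Finset.measurable_prod _ fun o _ => hZmeas o
    have hind : IndepFun (Z none) (fun ω => ∏ o ∈ s, Z o ω) P := by
      have := (hZindep.indepFun_finsetProd_of_notMem hZmeas hnones).symm
      have heq : (∏ o ∈ s, Z o) = fun ω => ∏ o ∈ s, Z o ω := by ext ω; simp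
      rwa [heq] at this
    calc ∫⁻ ω, (N ⁻¹' {n}).indicator (fun _ => (1 : ℝ≥0∞)) ω * ∏ i ∈ Finset.range n, G i ω ∂P
        = ∫⁻ ω, Z none ω * ∏ o ∈ s, Z o ω ∂P := by
          congr 1; ext ω; rw [hZnone, hprodeq ω]
      _ = (∫⁻ ω, Z none ω ∂P) * ∫⁻ ω, ∏ o ∈ s, Z o ω ∂P :=
          lintegral_mul_eq_lintegral_mul_lintegral_of_indepFun'' (hZmeas none).aemeasurable
            hprodmeas.aemeasurable hind
      _ = (∫⁻ ω, Z none ω ∂P) * ∏ o ∈ s, ∫⁻ ω, Z o ω ∂P := by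
          rw [aux_lintegral_indep_prod hZindep hZmeas]
      _ = ENNReal.ofReal (poissonPMFReal r n) * (ENNReal.ofReal c) ^ n := by
          have h1 : ∫⁻ ω, Z none ω ∂P = ENNReal.ofReal (poissonPMFReal r n) := by
            rw [hZnone]
            have hlind : ∫⁻ ω, (N ⁻¹' {n}).indicator (fun _ => (1 : ℝ≥0∞)) ω ∂P
                = P (N ⁻¹' {n}) := by
              rw [lintegral_indicator (hN (measurableSet_singleton n))]
              simp
            rw [hlind]
            have : P (N ⁻¹' {n}) = (P.map N) {n} := by
              rw [Measure.map_apply hN (measurableSet_singleton n)]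
            rw [this, hNlaw, poissonMeasure_singleton]
            rfl
          have h2 : ∏ o ∈ s, ∫⁻ ω, Z o ω ∂P = (ENNReal.ofReal c) ^ n := by
            rw [hsdef, Finset.prod_image (fun a _ b _ h => Option.some_injective ℕ h)]
            simp only [hZsome, hGint, Finset.prod_const, Finset.card_range]
          rw [h1, h2]
  -- pointwise decomposition
  have hdecomp : ∀ ω, ENNReal.ofReal (F ω)
      = ∑' n : ℕ, (N ⁻¹' {n}).indicator (fun _ => (1 : ℝ≥0∞)) ω
          * ∏ i ∈ Finset.range n, G i ω := by
    intro ω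
    rw [tsum_eq_single (N ω) ?_]
    · have hω : ω ∈ N ⁻¹' {N ω} := rfl
      rw [Set.indicator_of_mem hω, one_mul]
      exact ENNReal.ofReal_prod_of_nonneg fun i _ => hψnn (X i ω)
    · intro n hn
      have : ω ∉ N ⁻¹' {n} := by
        simp only [Set.mem_preimage, Set.mem_singleton_iff]
        exact fun h => hn h.symm
      simp [Set.indicator_of_notMem this]
  -- the lintegral
  have hlin : ∫⁻ ω, ENNReal.ofReal (F ω) ∂P = ENNReal.ofReal (Real.exp (↑r * M * cs)) := by
    have hmeasterm : ∀ n : ℕ, Measurable fun ω =>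
        (N ⁻¹' {n}).indicator (fun _ => (1 : ℝ≥0∞)) ω * ∏ i ∈ Finset.range n, G i ω :=
      fun n => ((measurable_one.indicator (hN (measurableSet_singleton n)))).mul
        (Finset.measurable_prod _ fun i _ => hGmeas i)
    calc ∫⁻ ω, ENNReal.ofReal (F ω) ∂P
        = ∫⁻ ω, ∑' n : ℕ, (N ⁻¹' {n}).indicator (fun _ => (1 : ℝ≥0∞)) ω
            * ∏ i ∈ Finset.range n, G i ω ∂P := by
          exact lintegral_congr fun ω => hdecomp ω
      _ = ∑' n : ℕ, ∫⁻ ω, (N ⁻¹' {n}).indicator (fun _ => (1 : ℝ≥0∞)) ω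
            * ∏ i ∈ Finset.range n, G i ω ∂P :=
          lintegral_tsum fun n => (hmeasterm n).aemeasurable
      _ = ∑' n : ℕ, ENNReal.ofReal (poissonPMFReal r n) * (ENNReal.ofReal c) ^ n := by
          exact tsum_congr hkey
      _ = ∑' n : ℕ, ENNReal.ofReal (Real.exp (-↑r) * (↑r * c) ^ n / n.factorial) := by
          refine tsum_congr fun n => ?_
          rw [← ENNReal.ofReal_pow hcnn, ← ENNReal.ofReal_mul poissonPMFReal_nonneg]
          congr 1
          rw [poissonPMFReal]
          rw [mul_pow]
          ring
      _ = ENNReal.ofReal (∑' n : ℕ, Real.exp (-↑r) * (↑r * c) ^ n / n.factorial) := by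
          rw [ENNReal.ofReal_tsum_of_nonneg]
          · intro n
            positivity
          · have h := Real.summable_pow_div_factorial (↑r * c)
            simpa [mul_div_assoc] using h.mul_left (Real.exp (-↑r))
      _ = ENNReal.ofReal (Real.exp (↑r * M * cs)) := by
          congr 1
          have hsum : ∑' n : ℕ, ((↑r : ℝ) * c) ^ n / n.factorial = Real.exp (↑r * c) := by
            rw [Real.exp_eq_exp_ℝ, NormedSpace.exp_eq_tsum_div]
          calc ∑' n : ℕ, Real.exp (-↑r) * (↑r * c) ^ n / n.factorial
              = Real.exp (-↑r) * ∑' n : ℕ, (↑r * c) ^ n / n.factorial := by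
                rw [← tsum_mul_left]
                exact tsum_congr fun n => by ring
            _ = Real.exp (-↑r) * Real.exp (↑r * c) := by rw [hsum]
            _ = Real.exp (↑r * M * cs) := by
                rw [← Real.exp_add]
                congr 1
                rw [hc]
                ring
  have hFint : Integrable F P := by
    refine ⟨hFmeas.aestronglyMeasurable, ?_⟩
    rw [hasFiniteIntegral_iff_ofReal (Filter.Eventually.of_forall hFnn), hlin]
    exact ENNReal.ofReal_lt_top
  have hFeq : ∫ ω, F ω ∂P = Real.exp (↑r * M * cs) := by
    rw [integral_eq_lintegral_of_nonneg_ae (Filter.Eventually.of_forall hFnn)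
      hFmeas.aestronglyMeasurable, hlin, ENNReal.toReal_ofReal (Real.exp_nonneg _)]
  exact ⟨hFint, hFeq⟩
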